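/- If A ~ Gam(λ₁+λ₂, c), B ~ Gam(λ₁, c), C ~ Gam(λ₂, c) are independent positive random variables (λ₁, λ₂, c > 0), then (B+C, AB/(B+C), AC/(B+C)) has the same joint distribution as (A,B,C). -/

import Mathlib

open MeasureTheory ProbabilityTheory

open Set Real

noncomputable section DTodaAux

namespace DTodaAux

def π₁ : (ℝ × ℝ × ℝ) →L[ℝ] ℝ := ContinuousLinearMap.fst ℝ ℝ (ℝ × ℝ)
def π₂ : (ℝ × ℝ × ℝ) →L[ℝ] ℝ :=
  (ContinuousLinearMap.fst ℝ ℝ ℝ).comp (ContinuousLinearMap.snd ℝ ℝ (ℝ × ℝ))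
def π₃ : (ℝ × ℝ × ℝ) →L[ℝ] ℝ :=
  (ContinuousLinearMap.snd ℝ ℝ ℝ).comp (ContinuousLinearMap.snd ℝ ℝ (ℝ × ℝ))

def lin3 (a b c : ℝ) : (ℝ × ℝ × ℝ) →L[ℝ] ℝ := a • π₁ + b • π₂ + c • π₃

@[simp] lemma lin3_apply (a b c : ℝ) (v : ℝ × ℝ × ℝ) :
    lin3 a b c v = a * v.1 + b * v.2.1 + c * v.2.2 := by
  simp [lin3, π₁, π₂, π₃]

def e3 : (ℝ × ℝ × ℝ) ≃ₗ[ℝ] (Fin 3 → ℝ) where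
  toFun p := ![p.1, p.2.1, p.2.2]
  invFun v := (v 0, v 1, v 2)
  map_add' p q := by funext i; fin_cases i <;> simp
  map_smul' r p := by funext i; fin_cases i <;> simp
  left_inv p := by simp
  right_inv v := by funext i; fin_cases i <;> simp

def b3 : Module.Basis (Fin 3) ℝ (ℝ × ℝ × ℝ) := Module.Basis.ofEquivFun e3

lemma det_lin3 (a b c d e f g h i : ℝ) :
    ContinuousLinearMap.det
      ((lin3 a b c).prod ((lin3 d e f).prod (lin3 g h i))) =
      a * (e * i - f * h) - b * (d * i - f * g) + c * (d * h - e * g) := by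
  have heq : ContinuousLinearMap.det ((lin3 a b c).prod ((lin3 d e f).prod (lin3 g h i)))
      = LinearMap.det (((lin3 a b c).prod ((lin3 d e f).prod (lin3 g h i))) :
          (ℝ × ℝ × ℝ) →L[ℝ] (ℝ × ℝ × ℝ)).toLinearMap := rfl
  rw [heq, ← LinearMap.det_toMatrix b3]
  have hm : LinearMap.toMatrix b3 b3
      (((lin3 a b c).prod ((lin3 d e f).prod (lin3 g h i))) :
        (ℝ × ℝ × ℝ) →L[ℝ] (ℝ × ℝ × ℝ)).toLinearMap = !![a, b, c; d, e, f; g, h, i] := by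
    ext i' j'
    rw [LinearMap.toMatrix_apply]
    fin_cases i' <;> fin_cases j' <;>
      simp [b3, Module.Basis.ofEquivFun_repr_apply, Module.Basis.coe_ofEquivFun, e3]
  rw [hm, Matrix.det_fin_three]
  simp [Matrix.cons_val_zero, Matrix.cons_val_one]
  ring

lemma measurable_gammaPDF (a r : ℝ) : Measurable (gammaPDF a r) :=
  (measurable_gammaPDFReal a r).ennreal_ofReal

def Tmap (p : ℝ × ℝ × ℝ) : ℝ × ℝ × ℝ :=
  (p.2.1 + p.2.2, p.1 * p.2.1 / (p.2.1 + p.2.2), p.1 * p.2.2 / (p.2.1 + p.2.2))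

lemma measurable_Tmap : Measurable Tmap := by
  unfold Tmap
  fun_prop

def Td (p : ℝ × ℝ × ℝ) : (ℝ × ℝ × ℝ) →L[ℝ] (ℝ × ℝ × ℝ) :=
  (lin3 0 1 1).prod
    ((lin3 (p.2.1 / (p.2.1 + p.2.2)) (p.1 * p.2.2 / (p.2.1 + p.2.2) ^ 2)
        (-(p.1 * p.2.1) / (p.2.1 + p.2.2) ^ 2)).prod
      (lin3 (p.2.2 / (p.2.1 + p.2.2)) (-(p.1 * p.2.2) / (p.2.1 + p.2.2) ^ 2)
        (p.1 * p.2.1 / (p.2.1 + p.2.2) ^ 2)))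

lemma hasFDerivAt_Tmap (p : ℝ × ℝ × ℝ) (hs : p.2.1 + p.2.2 ≠ 0) :
    HasFDerivAt Tmap (Td p) p := by
  have h1 : HasFDerivAt (fun q : ℝ × ℝ × ℝ => q.1) π₁ p := hasFDerivAt_fst
  have h2 : HasFDerivAt (fun q : ℝ × ℝ × ℝ => q.2.1) π₂ p :=
    hasFDerivAt_fst.comp p hasFDerivAt_snd
  have h3 : HasFDerivAt (fun q : ℝ × ℝ × ℝ => q.2.2) π₃ p :=
    hasFDerivAt_snd.comp p hasFDerivAt_snd
  have hS : HasFDerivAt (fun q : ℝ × ℝ × ℝ => q.2.1 + q.2.2) (π₂ + π₃) p := h2.add h3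
  have hInv : HasFDerivAt (fun q : ℝ × ℝ × ℝ => (q.2.1 + q.2.2)⁻¹)
      ((-ContinuousLinearMap.mulLeftRight ℝ ℝ (p.2.1 + p.2.2)⁻¹ (p.2.1 + p.2.2)⁻¹).comp
        (π₂ + π₃)) p := (hasFDerivAt_inv' hs).comp p hS
  have hB : HasFDerivAt (fun q : ℝ × ℝ × ℝ => q.1 * q.2.1) (p.1 • π₂ + p.2.1 • π₁) p :=
    h1.mul h2
  have hC : HasFDerivAt (fun q : ℝ × ℝ × ℝ => q.1 * q.2.2) (p.1 • π₃ + p.2.2 • π₁) p :=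
    h1.mul h3
  have hB' := hB.mul hInv
  have hC' := hC.mul hInv
  have e2 : ∀ q : ℝ × ℝ × ℝ, q.1 * q.2.1 / (q.2.1 + q.2.2) = q.1 * q.2.1 * (q.2.1 + q.2.2)⁻¹ :=
    fun q => div_eq_mul_inv _ _
  have e3' : ∀ q : ℝ × ℝ × ℝ, q.1 * q.2.2 / (q.2.1 + q.2.2) = q.1 * q.2.2 * (q.2.1 + q.2.2)⁻¹ :=
    fun q => div_eq_mul_inv _ _
  refine HasFDerivAt.prodMk ?_ (HasFDerivAt.prodMk ?_ ?_)
  · refine HasFDerivAt.congr_fderiv hS ?_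
    refine ContinuousLinearMap.ext fun v => ?_
    simp [lin3, π₁, π₂, π₃]
  · simp only [show (fun q : ℝ × ℝ × ℝ => q.1 * q.2.1 / (q.2.1 + q.2.2)) =
      (fun q : ℝ × ℝ × ℝ => q.1 * q.2.1 * (q.2.1 + q.2.2)⁻¹) from funext e2]
    refine HasFDerivAt.congr_fderiv hB' ?_
    refine ContinuousLinearMap.ext fun v => ?_
    simp only [lin3_apply, ContinuousLinearMap.add_apply, ContinuousLinearMap.coe_smul',
      Pi.smul_apply, smul_eq_mul, ContinuousLinearMap.comp_apply,
      ContinuousLinearMap.neg_apply, ContinuousLinearMap.mulLeftRight_apply]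
    simp [π₁, π₂, π₃]
    field_simp
    ring
  · simp only [show (fun q : ℝ × ℝ × ℝ => q.1 * q.2.2 / (q.2.1 + q.2.2)) =
      (fun q : ℝ × ℝ × ℝ => q.1 * q.2.2 * (q.2.1 + q.2.2)⁻¹) from funext e3']
    refine HasFDerivAt.congr_fderiv hC' ?_
    refine ContinuousLinearMap.ext fun v => ?_
    simp only [lin3_apply, ContinuousLinearMap.add_apply, ContinuousLinearMap.coe_smul',
      Pi.smul_apply, smul_eq_mul, ContinuousLinearMap.comp_apply,
      ContinuousLinearMap.neg_apply, ContinuousLinearMap.mulLeftRight_apply]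
    simp [π₁, π₂, π₃]
    field_simp
    ring

lemma det_Td (p : ℝ × ℝ × ℝ) (hs : p.2.1 + p.2.2 ≠ 0) :
    (Td p).det = -(p.1 / (p.2.1 + p.2.2)) := by
  rw [Td, det_lin3]
  field_simp
  ring

lemma measurable_absdet_Td :
    Measurable fun p : ℝ × ℝ × ℝ => ENNReal.ofReal |(Td p).det| := by
  have : (fun p : ℝ × ℝ × ℝ => (Td p).det) =
      fun p : ℝ × ℝ × ℝ =>
        0 * (p.1 * p.2.2 / (p.2.1 + p.2.2) ^ 2 * (p.1 * p.2.1 / (p.2.1 + p.2.2) ^ 2) -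
            -(p.1 * p.2.1) / (p.2.1 + p.2.2) ^ 2 * (-(p.1 * p.2.2) / (p.2.1 + p.2.2) ^ 2)) -
          1 * (p.2.1 / (p.2.1 + p.2.2) * (p.1 * p.2.1 / (p.2.1 + p.2.2) ^ 2) -
            -(p.1 * p.2.1) / (p.2.1 + p.2.2) ^ 2 * (p.2.2 / (p.2.1 + p.2.2))) +
          1 * (p.2.1 / (p.2.1 + p.2.2) * (-(p.1 * p.2.2) / (p.2.1 + p.2.2) ^ 2) -
            p.1 * p.2.2 / (p.2.1 + p.2.2) ^ 2 * (p.2.2 / (p.2.1 + p.2.2))) := by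
    funext p
    rw [Td, det_lin3]
  refine Measurable.ennreal_ofReal (Measurable.abs ?_)
  rw [this]
  fun_prop

def S3 : Set (ℝ × ℝ × ℝ) := Ioi 0 ×ˢ (Ioi 0 ×ˢ Ioi 0)

lemma measurableSet_S3 : MeasurableSet S3 :=
  measurableSet_Ioi.prod (measurableSet_Ioi.prod measurableSet_Ioi)

lemma mem_S3 {p : ℝ × ℝ × ℝ} : p ∈ S3 ↔ 0 < p.1 ∧ 0 < p.2.1 ∧ 0 < p.2.2 := by
  simp [S3, mem_prod]

lemma Tmap_mem_S3 {p : ℝ × ℝ × ℝ} (hp : p ∈ S3) : Tmap p ∈ S3 := by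
  rw [mem_S3] at hp
  obtain ⟨ha, hb, hd⟩ := hp
  rw [mem_S3]
  unfold Tmap
  exact ⟨by positivity, by positivity, by positivity⟩

lemma Tmap_Tmap {p : ℝ × ℝ × ℝ} (hp : p ∈ S3) : Tmap (Tmap p) = p := by
  obtain ⟨a, b, d⟩ := p
  rw [mem_S3] at hp
  obtain ⟨ha, hb, hd⟩ := hp
  simp only at ha hb hd
  have hS : b + d ≠ 0 := by positivity
  have ha' : a ≠ 0 := ha.ne'
  unfold Tmap
  simp only
  have h1 : a * b / (b + d) + a * d / (b + d) = a := by field_simp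
  rw [h1]
  simp only [Prod.mk.injEq, eq_self_iff_true, true_and]
  constructor <;> (field_simp; try ring)

lemma Tmap_injOn : Set.InjOn Tmap S3 := fun p hp q hq h => by
  rw [← Tmap_Tmap hp, ← Tmap_Tmap hq, h]

lemma Tmap_image : Tmap '' S3 = S3 := by
  apply Subset.antisymm
  · rintro _ ⟨p, hp, rfl⟩
    exact Tmap_mem_S3 hp
  · intro p hp
    exact ⟨Tmap p, Tmap_mem_S3 hp, Tmap_Tmap hp⟩

lemma gammaPDFReal_pos_eq {l c : ℝ} (hl : 0 < l) (hc : 0 < c) {x : ℝ} (hx : 0 < x) :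
    gammaPDFReal l c x =
      Real.exp (Real.log c * l - Real.log (Real.Gamma l) + Real.log x * (l - 1) - c * x) := by
  unfold gammaPDFReal
  rw [if_pos hx.le, Real.rpow_def_of_pos hc, Real.rpow_def_of_pos hx,
    ← Real.exp_log (Real.Gamma_pos_of_pos hl), ← Real.exp_sub, ← Real.exp_add, ← Real.exp_add]
  simp only [Real.log_exp]
  ring_nf

lemma real_pdf_identity (l₁ l₂ c : ℝ) (hl₁ : 0 < l₁) (hl₂ : 0 < l₂) (hc : 0 < c)
    (a b d : ℝ) (ha : 0 < a) (hb : 0 < b) (hd : 0 < d) :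
    a / (b + d) *
      (gammaPDFReal (l₁ + l₂) c (b + d) *
        (gammaPDFReal l₁ c (a * b / (b + d)) * gammaPDFReal l₂ c (a * d / (b + d)))) =
    gammaPDFReal (l₁ + l₂) c a * (gammaPDFReal l₁ c b * gammaPDFReal l₂ c d) := by
  have hS : 0 < b + d := by linarith
  have hl : 0 < l₁ + l₂ := by linarith
  rw [gammaPDFReal_pos_eq hl hc hS, gammaPDFReal_pos_eq hl hc ha,
    gammaPDFReal_pos_eq hl₁ hc (by positivity : (0:ℝ) < a * b / (b + d)),
    gammaPDFReal_pos_eq hl₂ hc (by positivity : (0:ℝ) < a * d / (b + d)),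
    gammaPDFReal_pos_eq hl₁ hc hb, gammaPDFReal_pos_eq hl₂ hc hd,
    show a / (b + d) = Real.exp (Real.log a - Real.log (b + d)) by
      rw [Real.exp_sub, Real.exp_log ha, Real.exp_log hS]]
  rw [← Real.exp_add, ← Real.exp_add, ← Real.exp_add, ← Real.exp_add, ← Real.exp_add,
    Real.exp_eq_exp]
  rw [Real.log_div (by positivity) hS.ne', Real.log_mul ha.ne' hb.ne',
    Real.log_div (by positivity) hS.ne', Real.log_mul ha.ne' hd.ne']
  field_simp
  ring

lemma withDensity_prod_aux {α β : Type*} [MeasurableSpace α] [MeasurableSpace β]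
    (μ : Measure α) (ν : Measure β) [SigmaFinite μ] [SigmaFinite ν]
    (f : α → ENNReal) (g : β → ENNReal) (hf : Measurable f) (hg : Measurable g)
    [SigmaFinite (μ.withDensity f)] [SigmaFinite (ν.withDensity g)] :
    (μ.withDensity f).prod (ν.withDensity g) =
      (μ.prod ν).withDensity (fun p => f p.1 * g p.2) := by
  refine Measure.prod_eq fun s t hs ht => ?_
  rw [withDensity_apply _ (hs.prod ht), ← Measure.prod_restrict,
    lintegral_prod_mul hf.aemeasurable hg.aemeasurable,
    withDensity_apply _ hs, withDensity_apply _ ht]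

lemma map_withDensity_comp {α β : Type*} [MeasurableSpace α] [MeasurableSpace β]
    (μ : Measure α) (T : α → β) (hT : Measurable T) (g : β → ENNReal) (hg : Measurable g) :
    Measure.map T (μ.withDensity fun x => g (T x)) = (Measure.map T μ).withDensity g := by
  refine Measure.ext fun t ht => ?_
  rw [Measure.map_apply hT ht, withDensity_apply _ (hT ht), withDensity_apply _ ht,
    setLIntegral_map ht hg hT]

end DTodaAux

end DTodaAux

open DTodaAux in
theorem dToda_gamma_invariance (l₁ l₂ c : ℝ) (hl₁ : 0 < l₁) (hl₂ : 0 < l₂) (hc : 0 < c) :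
    Measure.map
      (fun p : ℝ × ℝ × ℝ =>
        (p.2.1 + p.2.2, p.1 * p.2.1 / (p.2.1 + p.2.2), p.1 * p.2.2 / (p.2.1 + p.2.2)))
      ((gammaMeasure (l₁ + l₂) c).prod ((gammaMeasure l₁ c).prod (gammaMeasure l₂ c))) =
      (gammaMeasure (l₁ + l₂) c).prod ((gammaMeasure l₁ c).prod (gammaMeasure l₂ c)) := by
  classical
  have hl : 0 < l₁ + l₂ := by linarith
  haveI hP0 : IsProbabilityMeasure (gammaMeasure (l₁ + l₂) c) :=
    isProbabilityMeasure_gammaMeasure hl hc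
  haveI hP1 : IsProbabilityMeasure (gammaMeasure l₁ c) := isProbabilityMeasure_gammaMeasure hl₁ hc
  haveI hP2 : IsProbabilityMeasure (gammaMeasure l₂ c) := isProbabilityMeasure_gammaMeasure hl₂ hc
  haveI hHaar : (volume : Measure (ℝ × ℝ × ℝ)).IsAddHaarMeasure := by
    rw [Measure.volume_eq_prod]; infer_instance
  -- the joint density
  set F : ℝ × ℝ × ℝ → ENNReal := fun p =>
    gammaPDF (l₁ + l₂) c p.1 * (gammaPDF l₁ c p.2.1 * gammaPDF l₂ c p.2.2) with hF
  have hFmeas : Measurable F := by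
    apply Measurable.fun_mul
    · exact ((measurable_gammaPDFReal _ _).ennreal_ofReal).comp measurable_fst
    · exact (((measurable_gammaPDFReal _ _).ennreal_ofReal).comp
        (measurable_fst.comp measurable_snd)).mul
        (((measurable_gammaPDFReal _ _).ennreal_ofReal).comp
          (measurable_snd.comp measurable_snd))
  haveI hsf1 : SigmaFinite ((volume : Measure ℝ).withDensity (gammaPDF (l₁ + l₂) c)) := by
    change SigmaFinite (gammaMeasure (l₁ + l₂) c); infer_instance
  haveI hsf2 : SigmaFinite ((volume : Measure ℝ).withDensity (gammaPDF l₁ c)) := by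
    change SigmaFinite (gammaMeasure l₁ c); infer_instance
  haveI hsf3 : SigmaFinite ((volume : Measure ℝ).withDensity (gammaPDF l₂ c)) := by
    change SigmaFinite (gammaMeasure l₂ c); infer_instance
  -- the triple product measure is volume with density F
  have hprod : (gammaMeasure (l₁ + l₂) c).prod ((gammaMeasure l₁ c).prod (gammaMeasure l₂ c)) =
      (volume : Measure (ℝ × ℝ × ℝ)).withDensity F := by
    have hinner : (gammaMeasure l₁ c).prod (gammaMeasure l₂ c) =
        (volume : Measure (ℝ × ℝ)).withDensity
          (fun q => gammaPDF l₁ c q.1 * gammaPDF l₂ c q.2) := by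
      rw [show gammaMeasure l₁ c = volume.withDensity (gammaPDF l₁ c) from rfl,
        show gammaMeasure l₂ c = volume.withDensity (gammaPDF l₂ c) from rfl]
      rw [withDensity_prod_aux volume volume _ _
        (measurable_gammaPDF _ _) (measurable_gammaPDF _ _), ← Measure.volume_eq_prod]
    rw [hinner, show gammaMeasure (l₁ + l₂) c = volume.withDensity (gammaPDF (l₁ + l₂) c)
      from rfl]
    haveI : SigmaFinite ((volume : Measure (ℝ × ℝ)).withDensity
        (fun q => gammaPDF l₁ c q.1 * gammaPDF l₂ c q.2)) := by
      rw [← hinner]; infer_instance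
    rw [withDensity_prod_aux volume volume _ _
      (measurable_gammaPDF _ _)
      (show Measurable fun q : ℝ × ℝ => gammaPDF l₁ c q.1 * gammaPDF l₂ c q.2 from
        ((measurable_gammaPDF _ _).comp measurable_fst).mul
          ((measurable_gammaPDF _ _).comp measurable_snd)),
      ← Measure.volume_eq_prod]
  -- F vanishes a.e. outside S3
  have hnull : (volume : Measure (ℝ × ℝ × ℝ))
      ({p : ℝ × ℝ × ℝ | p.1 = 0} ∪ ({p | p.2.1 = 0} ∪ {p | p.2.2 = 0})) = 0 := by
    refine measure_union_null ?_ (measure_union_null ?_ ?_)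
    · have : {p : ℝ × ℝ × ℝ | p.1 = 0} = ({0} : Set ℝ) ×ˢ (univ : Set (ℝ × ℝ)) := by
        ext p
        simp only [mem_setOf_eq, mem_prod, mem_singleton_iff, mem_univ, and_true]
      rw [this, Measure.volume_eq_prod, Measure.prod_prod]
      simp
    · have : {p : ℝ × ℝ × ℝ | p.2.1 = 0} =
          (univ : Set ℝ) ×ˢ (({0} : Set ℝ) ×ˢ (univ : Set ℝ)) := by
        ext p
        simp only [mem_setOf_eq, mem_prod, mem_singleton_iff, mem_univ, and_true, true_and]
      rw [this, Measure.volume_eq_prod, Measure.prod_prod, Measure.volume_eq_prod,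
        Measure.prod_prod]
      simp
    · have : {p : ℝ × ℝ × ℝ | p.2.2 = 0} =
          (univ : Set ℝ) ×ˢ ((univ : Set ℝ) ×ˢ ({0} : Set ℝ)) := by
        ext p
        simp only [mem_setOf_eq, mem_prod, mem_singleton_iff, mem_univ, and_true, true_and]
      rw [this, Measure.volume_eq_prod, Measure.prod_prod, Measure.volume_eq_prod,
        Measure.prod_prod]
      simp
  have hrestr : (volume : Measure (ℝ × ℝ × ℝ)).withDensity F =
      ((volume : Measure (ℝ × ℝ × ℝ)).restrict S3).withDensity F := by
    rw [← withDensity_indicator measurableSet_S3]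
    refine withDensity_congr_ae ?_
    filter_upwards [measure_eq_zero_iff_ae_notMem.mp hnull] with p hp
    by_cases hps : p ∈ S3
    · rw [indicator_of_mem hps]
    · rw [indicator_of_notMem hps]
      simp only [mem_union, mem_setOf_eq, not_or] at hp
      rw [mem_S3, not_and_or, not_and_or] at hps
      have : gammaPDF (l₁ + l₂) c p.1 = 0 ∨ gammaPDF l₁ c p.2.1 = 0 ∨
          gammaPDF l₂ c p.2.2 = 0 := by
        rcases hps with h | h | h
        · exact Or.inl (gammaPDF_of_neg (lt_of_le_of_ne (not_lt.mp h) hp.1))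
        · exact Or.inr (Or.inl (gammaPDF_of_neg (lt_of_le_of_ne (not_lt.mp h) hp.2.1)))
        · exact Or.inr (Or.inr (gammaPDF_of_neg (lt_of_le_of_ne (not_lt.mp h) hp.2.2)))
      rcases this with h | h | h <;> simp [hF, h]
  -- pointwise density identity on S3
  have hpoint : ∀ p ∈ S3, F p = ENNReal.ofReal |(Td p).det| * F (Tmap p) := by
    intro p hp
    rw [mem_S3] at hp
    obtain ⟨ha, hb, hd⟩ := hp
    have hS : (0:ℝ) < p.2.1 + p.2.2 := by linarith
    have habs : ENNReal.ofReal |(Td p).det| = ENNReal.ofReal (p.1 / (p.2.1 + p.2.2)) := by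
      rw [det_Td p hS.ne', abs_neg, abs_of_pos (by positivity)]
    calc F p = ENNReal.ofReal (gammaPDFReal (l₁ + l₂) c p.1 *
          (gammaPDFReal l₁ c p.2.1 * gammaPDFReal l₂ c p.2.2)) := by
          rw [hF]
          simp only [gammaPDF]
          rw [ENNReal.ofReal_mul (gammaPDFReal_nonneg hl hc _),
            ENNReal.ofReal_mul (gammaPDFReal_nonneg hl₁ hc _)]
      _ = ENNReal.ofReal (p.1 / (p.2.1 + p.2.2) *
          (gammaPDFReal (l₁ + l₂) c (p.2.1 + p.2.2) *
            (gammaPDFReal l₁ c (p.1 * p.2.1 / (p.2.1 + p.2.2)) *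
              gammaPDFReal l₂ c (p.1 * p.2.2 / (p.2.1 + p.2.2))))) := by
          rw [real_pdf_identity l₁ l₂ c hl₁ hl₂ hc p.1 p.2.1 p.2.2 ha hb hd]
      _ = ENNReal.ofReal |(Td p).det| * F (Tmap p) := by
          rw [habs, hF]
          simp only [Tmap, gammaPDF]
          rw [ENNReal.ofReal_mul (by positivity : (0:ℝ) ≤ p.1 / (p.2.1 + p.2.2)),
            ENNReal.ofReal_mul (gammaPDFReal_nonneg hl hc _),
            ENNReal.ofReal_mul (gammaPDFReal_nonneg hl₁ hc _)]
  -- differentiability on S3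
  have hTd : ∀ x ∈ S3, HasFDerivWithinAt Tmap (Td x) S3 x := by
    intro x hx
    rw [mem_S3] at hx
    obtain ⟨_, hb, hd⟩ := hx
    exact (hasFDerivAt_Tmap x (by positivity : (0:ℝ) < x.2.1 + x.2.2).ne').hasFDerivWithinAt
  -- Jacobian change of variables
  have hmap : Measure.map Tmap
      (((volume : Measure (ℝ × ℝ × ℝ)).restrict S3).withDensity
        fun x => ENNReal.ofReal |(Td x).det|) = volume.restrict S3 := by
    rw [map_withDensity_abs_det_fderiv_eq_addHaar volume measurableSet_S3.nullMeasurableSet hTd Tmap_injOn,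
      Tmap_image]
  -- split the density
  have hsplit : ((volume : Measure (ℝ × ℝ × ℝ)).restrict S3).withDensity F =
      ((((volume : Measure (ℝ × ℝ × ℝ)).restrict S3).withDensity
        fun x => ENNReal.ofReal |(Td x).det|).withDensity fun x => F (Tmap x)) := by
    rw [← withDensity_mul _ measurable_absdet_Td
      (show Measurable fun x => F (Tmap x) from hFmeas.comp measurable_Tmap)]
    refine withDensity_congr_ae ?_
    filter_upwards [ae_restrict_mem measurableSet_S3] with p hp
    exact hpoint p hp
  show Measure.map Tmap
      ((gammaMeasure (l₁ + l₂) c).prod ((gammaMeasure l₁ c).prod (gammaMeasure l₂ c))) =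
      (gammaMeasure (l₁ + l₂) c).prod ((gammaMeasure l₁ c).prod (gammaMeasure l₂ c))
  rw [hprod, hrestr, hsplit,
    map_withDensity_comp _ Tmap measurable_Tmap F hFmeas, hmap]
  exact hsplit
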